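/- Let ν be a Lévy measure on ℝ^d, let 0 < a < ∞, and let f : (0,a) → ℝ be measurable with ∫₀^a f(s)² ds < ∞. Then ∫₀^a ∫_{ℝ^d} (|f(s)x|² ∧ 1) ν(dx) ds < ∞; in particular, the transformed measure T_f ν is again a Lévy measure on ℝ^d. -/

import Mathlib

open MeasureTheory

/-- If `ν` is a Lévy measure on `ℝ^d` and `f` is square integrable on `(0,a)`,
then `∫₀^a ∫ (|f(s)x|² ∧ 1) ν(dx) ds < ∞`; in particular the transformed measure
`(T_f ν)(B) = ∫₀^a ν({x : f(s)x ∈ B}) ds` (for `B ⊆ ℝ^d ∖ {0}`) is again a Lévy measure. -/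
theorem stmt_3 (d : ℕ) (hd : 1 ≤ d)
    (ν : Measure (EuclideanSpace ℝ (Fin d)))
    (hν0 : ν {0} = 0)
    (hνfin : ∫⁻ x, ENNReal.ofReal (min (‖x‖ ^ 2) 1) ∂ν < ⊤)
    (a : ℝ) (ha : 0 < a) (f : ℝ → ℝ) (hf : Measurable f)
    (hf2 : ∫⁻ s in Set.Ioo 0 a, ENNReal.ofReal (f s ^ 2) < ⊤) :
    (∫⁻ s in Set.Ioo 0 a, ∫⁻ x, ENNReal.ofReal (min (‖f s • x‖ ^ 2) 1) ∂ν < ⊤) ∧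
    ∀ μ : Measure (EuclideanSpace ℝ (Fin d)),
      μ {0} = 0 →
      (∀ B : Set (EuclideanSpace ℝ (Fin d)), MeasurableSet B → B ⊆ {0}ᶜ →
        μ B = ∫⁻ s in Set.Ioo 0 a, ν {x | f s • x ∈ B}) →
      ∫⁻ x, ENNReal.ofReal (min (‖x‖ ^ 2) 1) ∂μ < ⊤ := by
  set E := EuclideanSpace ℝ (Fin d)
  set g : E → ℝ := fun x => min (‖x‖ ^ 2) 1 with hgdef
  have hgmeas : Measurable g := (measurable_norm.pow_const 2).min measurable_const
  have hgnn : ∀ x, 0 ≤ g x := fun x => le_min (by positivity) zero_le_one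
  -- sets {ε < ‖x‖} have finite ν-measure
  have key : ∀ ε : ℝ, 0 < ε → ν {x : E | ε < ‖x‖} < ⊤ := by
    intro ε hε
    have hc : (0:ℝ) < min (ε ^ 2) 1 := lt_min (by positivity) one_pos
    have hb : ENNReal.ofReal (min (ε ^ 2) 1) * ν {x : E | ε < ‖x‖} ≤
        ∫⁻ x, ENNReal.ofReal (g x) ∂ν := by
      rw [← setLIntegral_const]
      refine le_trans (setLIntegral_mono (hgmeas.ennreal_ofReal) ?_)
        (setLIntegral_le_lintegral _ _)
      intro x hx
      refine ENNReal.ofReal_le_ofReal (min_le_min ?_ le_rfl)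
      have : ε ≤ ‖x‖ := le_of_lt hx
      nlinarith [norm_nonneg x]
    by_contra hS
    rw [not_lt, top_le_iff] at hS
    rw [hS, ENNReal.mul_top (ENNReal.ofReal_pos.mpr hc).ne'] at hb
    exact (hνfin.trans_le hb).false
  -- ν is sigma-finite
  haveI hσ : SigmaFinite ν := by
    refine ⟨⟨⟨fun n => {0} ∪ {x : E | 1 / (n + 1) < ‖x‖}, fun _ => trivial, ?_, ?_⟩⟩⟩
    · intro n
      refine lt_of_le_of_lt (measure_union_le _ _) ?_
      rw [hν0, zero_add]
      exact key _ (by positivity)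
    · ext x
      simp only [Set.mem_iUnion, Set.mem_union, Set.mem_setOf_eq, Set.mem_univ, iff_true]
      rcases eq_or_ne x 0 with h | h
      · exact ⟨0, Or.inl h⟩
      · obtain ⟨n, hn⟩ := exists_nat_one_div_lt (norm_pos_iff.mpr h)
        exact ⟨n, Or.inr (by exact_mod_cast hn)⟩
  -- pointwise bound
  have hpoint : ∀ (c : ℝ) (x : E), ENNReal.ofReal (min (‖c • x‖ ^ 2) 1) ≤
      ENNReal.ofReal (max (c ^ 2) 1) * ENNReal.ofReal (g x) := by
    intro c x
    rw [← ENNReal.ofReal_mul (le_max_of_le_right zero_le_one)]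
    refine ENNReal.ofReal_le_ofReal ?_
    have hx : (0:ℝ) ≤ ‖x‖ ^ 2 := by positivity
    have h2 : ‖c • x‖ ^ 2 = c ^ 2 * ‖x‖ ^ 2 := by
      rw [norm_smul, mul_pow, Real.norm_eq_abs, sq_abs]
    rw [h2]
    rcases le_or_gt 1 (‖x‖ ^ 2) with h1 | h1
    · have : min (‖x‖ ^ 2) 1 = 1 := min_eq_right h1
      simp only [hgdef, this]
      calc min (c ^ 2 * ‖x‖ ^ 2) 1 ≤ 1 := min_le_right _ _
        _ ≤ max (c ^ 2) 1 * 1 := by rw [mul_one]; exact le_max_right _ _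
    · have : min (‖x‖ ^ 2) 1 = ‖x‖ ^ 2 := min_eq_left h1.le
      simp only [hgdef, this]
      calc min (c ^ 2 * ‖x‖ ^ 2) 1 ≤ c ^ 2 * ‖x‖ ^ 2 := min_le_left _ _
        _ ≤ max (c ^ 2) 1 * ‖x‖ ^ 2 := by
            exact mul_le_mul_of_nonneg_right (le_max_left _ _) hx
  set C : ENNReal := ∫⁻ x, ENNReal.ofReal (g x) ∂ν with hCdef
  have hCne : C ≠ ⊤ := hνfin.ne
  have hinner : ∀ s : ℝ, ∫⁻ x, ENNReal.ofReal (min (‖f s • x‖ ^ 2) 1) ∂ν ≤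
      ENNReal.ofReal (max (f s ^ 2) 1) * C := by
    intro s
    calc ∫⁻ x, ENNReal.ofReal (min (‖f s • x‖ ^ 2) 1) ∂ν
        ≤ ∫⁻ x, ENNReal.ofReal (max (f s ^ 2) 1) * ENNReal.ofReal (g x) ∂ν :=
          lintegral_mono (hpoint (f s))
      _ = ENNReal.ofReal (max (f s ^ 2) 1) * C :=
          lintegral_const_mul' _ _ ENNReal.ofReal_ne_top
  have hmaxint : ∫⁻ s in Set.Ioo 0 a, ENNReal.ofReal (max (f s ^ 2) 1) < ⊤ := by
    have hb : ∀ s : ℝ, ENNReal.ofReal (max (f s ^ 2) 1) ≤ ENNReal.ofReal (f s ^ 2) + 1 := by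
      intro s
      rw [← ENNReal.ofReal_one, ← ENNReal.ofReal_add (by positivity) zero_le_one]
      exact ENNReal.ofReal_le_ofReal (max_le (by linarith [sq_nonneg (f s)]) (by linarith [sq_nonneg (f s)]))
    calc ∫⁻ s in Set.Ioo 0 a, ENNReal.ofReal (max (f s ^ 2) 1)
        ≤ ∫⁻ s in Set.Ioo 0 a, (ENNReal.ofReal (f s ^ 2) + 1) := lintegral_mono hb
      _ = (∫⁻ s in Set.Ioo 0 a, ENNReal.ofReal (f s ^ 2)) + 1 * volume (Set.Ioo 0 a) := by
          rw [lintegral_add_right _ measurable_const, setLIntegral_const]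
      _ < ⊤ := by
          rw [one_mul, Real.volume_Ioo]
          exact ENNReal.add_lt_top.mpr ⟨hf2, ENNReal.ofReal_lt_top⟩
  have part1 : ∫⁻ s in Set.Ioo 0 a, ∫⁻ x, ENNReal.ofReal (min (‖f s • x‖ ^ 2) 1) ∂ν < ⊤ := by
    calc ∫⁻ s in Set.Ioo 0 a, ∫⁻ x, ENNReal.ofReal (min (‖f s • x‖ ^ 2) 1) ∂ν
        ≤ ∫⁻ s in Set.Ioo 0 a, ENNReal.ofReal (max (f s ^ 2) 1) * C :=
          lintegral_mono fun s => hinner s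
      _ = (∫⁻ s in Set.Ioo 0 a, ENNReal.ofReal (max (f s ^ 2) 1)) * C :=
          lintegral_mul_const' _ _ hCne
      _ < ⊤ := ENNReal.mul_lt_top hmaxint (hCne.lt_top)
  refine ⟨part1, ?_⟩
  intro μ hμ0 hμB
  -- layer cake for μ
  have hlayer : ∫⁻ x, ENNReal.ofReal (g x) ∂μ = ∫⁻ t in Set.Ioi 0, μ {x : E | t < g x} :=
    lintegral_eq_lintegral_meas_lt μ (ae_of_all _ hgnn) hgmeas.aemeasurable
  -- express the tail measures via ν
  have hrepr : ∀ t : ℝ, 0 < t →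
      μ {x : E | t < g x} = ∫⁻ s in Set.Ioo 0 a, ν {x : E | t < g (f s • x)} := by
    intro t ht
    have hBmeas : MeasurableSet {x : E | t < g x} := measurableSet_lt measurable_const hgmeas
    have hBsub : {x : E | t < g x} ⊆ ({0} : Set E)ᶜ := by
      intro x hx
      simp only [Set.mem_compl_iff, Set.mem_singleton_iff]
      rintro rfl
      simp only [Set.mem_setOf_eq, hgdef, norm_zero] at hx
      norm_num at hx
      linarith
    exact hμB _ hBmeas hBsub
  -- joint measurability for Tonelli
  have hjoint : Measurable fun p : ℝ × ℝ => ν {x : E | p.1 < g (f p.2 • x)} := by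
    have hS : MeasurableSet {q : (ℝ × ℝ) × E | q.1.1 < g (f q.1.2 • q.2)} := by
      apply measurableSet_lt (measurable_fst.fst)
      exact hgmeas.comp ((hf.comp measurable_fst.snd).smul measurable_snd)
    have := measurable_measure_prodMk_left (ν := ν) hS
    exact this
  have hswap : ∫⁻ t in Set.Ioi 0, ∫⁻ s in Set.Ioo 0 a, ν {x : E | t < g (f s • x)} =
      ∫⁻ s in Set.Ioo 0 a, ∫⁻ t in Set.Ioi 0, ν {x : E | t < g (f s • x)} := by
    exact lintegral_lintegral_swap hjoint.aemeasurable
  have hlayer2 : ∀ s : ℝ, ∫⁻ t in Set.Ioi 0, ν {x : E | t < g (f s • x)} =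
      ∫⁻ x, ENNReal.ofReal (g (f s • x)) ∂ν := by
    intro s
    exact (lintegral_eq_lintegral_meas_lt ν (ae_of_all _ fun x => hgnn _)
      (hgmeas.comp (measurable_id.const_smul (f s))).aemeasurable).symm
  rw [hlayer]
  rw [setLIntegral_congr_fun measurableSet_Ioi
    (fun t (ht : t ∈ Set.Ioi 0) => hrepr t ht)]
  rw [hswap]
  rw [setLIntegral_congr_fun measurableSet_Ioo (fun s _ => hlayer2 s)]
  exact part1
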